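/- Let μ > 0, let N be a natural number with N ≥ 2, and let T ∈ ℝ with T ≥ μ·N. Then the function g(η) = η · (T/η − μ)² is strictly decreasing on the interval [1, N−1]: for all real η₁, η₂ with 1 ≤ η₁ < η₂ ≤ N−1, one has g(η₂) < g(η₁). -/
import Mathlib


/-- If `μ > 0`, `N ≥ 2` and `T ≥ μ N`, then `g(η) = η (T/η − μ)²` is strictly
decreasing on `[1, N−1]`. -/
theorem path_cost_strictly_decreasing (μ : ℝ) (hμ : 0 < μ) (N : ℕ) (hN : 2 ≤ N)
    (T : ℝ) (hT : μ * (N : ℝ) ≤ T) (η₁ η₂ : ℝ)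
    (h1 : 1 ≤ η₁) (h12 : η₁ < η₂) (h2 : η₂ ≤ (N : ℝ) - 1) :
    η₂ * (T / η₂ - μ) ^ 2 < η₁ * (T / η₁ - μ) ^ 2 := by
  have h0 : (0:ℝ) < η₁ := lt_of_lt_of_le one_pos h1
  have h0' : (0:ℝ) < η₂ := lt_trans h0 h12
  have hNpos : (0:ℝ) < (N:ℝ) := by positivity
  have hTpos : 0 < T := lt_of_lt_of_le (mul_pos hμ hNpos) hT
  have key : μ * μ * (η₁ * η₂) < T * T := by
    have h1N : η₁ < (N:ℝ) := by linarith
    have h2N : η₂ < (N:ℝ) := by linarith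
    have : μ * μ * (η₁ * η₂) < μ * μ * ((N:ℝ) * (N:ℝ)) := by
      apply mul_lt_mul_of_pos_left _ (by positivity)
      exact mul_lt_mul' (le_of_lt h1N) h2N (le_of_lt h0') hNpos
    calc μ * μ * (η₁ * η₂) < μ * μ * ((N:ℝ) * (N:ℝ)) := this
      _ = (μ * (N:ℝ)) * (μ * (N:ℝ)) := by ring
      _ ≤ T * T := mul_le_mul hT hT (le_of_lt (mul_pos hμ hNpos)) (le_of_lt hTpos)
  have e1 : η₁ * (T / η₁ - μ) ^ 2 = T ^ 2 / η₁ - 2 * T * μ + μ ^ 2 * η₁ := by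
    field_simp; ring
  have e2 : η₂ * (T / η₂ - μ) ^ 2 = T ^ 2 / η₂ - 2 * T * μ + μ ^ 2 * η₂ := by
    field_simp; ring
  rw [e1, e2]
  have d1 : T ^ 2 / η₁ * η₁ = T ^ 2 := div_mul_cancel₀ _ (ne_of_gt h0)
  have d2 : T ^ 2 / η₂ * η₂ = T ^ 2 := div_mul_cancel₀ _ (ne_of_gt h0')
  nlinarith [mul_pos h0 h0', mul_pos (sub_pos.2 h12) (mul_pos h0 h0'), d1, d2, key,
    mul_pos (sub_pos.2 h12) h0, mul_pos (sub_pos.2 h12) h0']
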